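/- Let G be the directed graph on the nine vertices {U, X, D, o, Y₀, Y₁, Δ, E₀, E₁} with edge set {(U,Y₀), (U,Y₁), (U,D), (U,X), (X,Y₀), (X,Y₁), (X,D), (X,Δ), (E₀,Y₀), (E₀,Δ), (E₁,Y₁), (E₁,Δ), (o,Y₁), (o,Δ)}. (This is the Δ-SWIG of the canonical 2×2 difference-in-differences model with time-invariant covariate X, unobserved time-invariant confounder U, split treatment node with random part D and fixed part o, untreated potential outcomes Y₀ and Y₁ with exogenous noises E₀ and E₁, and difference node Δ = Y₁(0) − Y₀; the edge from U into Δ cancels under single world additive separability.) Then G is a DAG; {D} and {Δ} are d-separated by {X, o} in G; but {D} and {Δ} are not d-separated by {X, Y₀, o} in G (conditioning on the pre-treatment outcome Y₀ opens the path D ← U → Y₀ ← E₀ → Δ, i.e. M-bias). -/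
import Mathlib


/-! ## Directed graphs, paths, d-separation -/

namespace DeltaSwig

variable {V : Type*}

/-- `b` is a descendant of `a`: reachable from `a` by a nonempty directed path. -/
def Descendant (E : V → V → Prop) (a b : V) : Prop := Relation.TransGen E a b

/-- A directed graph is a DAG if no vertex is related to itself by the
transitive closure of the edge relation. -/
def IsDAG (E : V → V → Prop) : Prop := ∀ v : V, ¬ Relation.TransGen E v v

/-- A path of length `k ≥ 1` between `v 0` and `v k`: pairwise distinct vertices,
consecutive vertices joined by an edge in either direction. -/
structure IsPath (E : V → V → Prop) (k : ℕ) (v : ℕ → V) : Prop where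
  one_le : 1 ≤ k
  inj : ∀ i ≤ k, ∀ j ≤ k, v i = v j → i = j
  adj : ∀ i < k, E (v i) (v (i + 1)) ∨ E (v (i + 1)) (v i)

/-- The interior vertex `v j` is a collider on the path `v`. -/
def IsCollider (E : V → V → Prop) (v : ℕ → V) (j : ℕ) : Prop :=
  E (v (j - 1)) (v j) ∧ E (v (j + 1)) (v j)

/-- The path `v` (of length `k`) is blocked by the set `Z`. -/
def Blocked (E : V → V → Prop) (k : ℕ) (v : ℕ → V) (Z : Set V) : Prop :=
  ∃ j, 0 < j ∧ j < k ∧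
    ((¬ IsCollider E v j ∧ v j ∈ Z) ∨
      (IsCollider E v j ∧ v j ∉ Z ∧ ∀ w, Descendant E (v j) w → w ∉ Z))

/-- `X` and `Y` are d-separated by `Z`: every path from a vertex of `X` to a
vertex of `Y` is blocked by `Z`. -/
def DSep (E : V → V → Prop) (X Y Z : Set V) : Prop :=
  ∀ (k : ℕ) (v : ℕ → V), IsPath E k v → v 0 ∈ X → v k ∈ Y → Blocked E k v Z

/-- Restriction of an edge relation to a set of kept vertices (vertex deletion). -/
def restrictEdge (E : V → V → Prop) (K : Set V) : V → V → Prop :=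
  fun a b => E a b ∧ a ∈ K ∧ b ∈ K

/-- The parents of a vertex. -/
def parents (E : V → V → Prop) (v : V) : Set V := {w | E w v}

end DeltaSwig

namespace DeltaSwig

/-- Vertices of the Δ-SWIG of the canonical 2×2 difference-in-differences
model with time-invariant covariates. -/
inductive V11 : Type
  | U | X | D | o | Y0 | Y1 | Δ | E0 | E1
  deriving DecidableEq

open V11 in
/-- Edges of the 2×2 Δ-SWIG with time-invariant covariate `X`. -/
def E11 : V11 → V11 → Prop := fun a b =>
  (a, b) ∈ ([(U, Y0), (U, Y1), (U, D), (U, X),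
    (X, Y0), (X, Y1), (X, D), (X, Δ),
    (E0, Y0), (E0, Δ), (E1, Y1), (E1, Δ),
    (o, Y1), (o, Δ)] : List (V11 × V11))

instance : Fintype V11 where
  elems := {.U, .X, .D, .o, .Y0, .Y1, .Δ, .E0, .E1}
  complete := by intro x; cases x <;> simp

instance : DecidableRel E11 := fun a b =>
  inferInstanceAs (Decidable ((a, b) ∈ _))

open V11

/-- Rank function witnessing acyclicity. -/
def rank11 : V11 → ℕ
  | U => 0 | E0 => 0 | E1 => 0 | o => 0
  | X => 1
  | D => 2 | Y0 => 2 | Y1 => 2 | Δ => 2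

lemma rank_lt : ∀ a b, E11 a b → rank11 a < rank11 b := by decide

lemma transGen_rank_lt : ∀ a b, Relation.TransGen E11 a b → rank11 a < rank11 b := by
  intro a b h
  induction h with
  | single h => exact rank_lt _ _ h
  | tail _ h ih => exact ih.trans (rank_lt _ _ h)

lemma E11_isDAG : IsDAG E11 := fun v h => lt_irrefl _ (transGen_rank_lt v v h)

lemma no_edge_from_D : ∀ b, ¬ E11 D b := by decide
lemma no_edge_to_U : ∀ a, ¬ E11 a U := by decide
lemma no_edge_from_Y0 : ∀ b, ¬ E11 Y0 b := by decide
lemma no_edge_from_Y1 : ∀ b, ¬ E11 Y1 b := by decide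
lemma parents_D : ∀ a, E11 a D → a = U ∨ a = X := by decide
lemma parents_X : ∀ a, E11 a X → a = U := by decide
lemma children_U : ∀ b, E11 U b → b = Y0 ∨ b = Y1 ∨ b = D ∨ b = X := by decide

lemma no_desc_Y0 : ∀ w, ¬ Descendant E11 Y0 w := fun w h => by
  rcases Relation.TransGen.head'_iff.mp h with ⟨c, hc, -⟩
  exact no_edge_from_Y0 c hc

lemma no_desc_Y1 : ∀ w, ¬ Descendant E11 Y1 w := fun w h => by
  rcases Relation.TransGen.head'_iff.mp h with ⟨c, hc, -⟩
  exact no_edge_from_Y1 c hc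

lemma dsep_XO : DSep E11 {D} {Δ} {X, o} := by
  intro k v hp hv0 hvk
  have hv0' : v 0 = D := hv0
  have hvk' : v k = Δ := hvk
  -- v 1 is a parent of D
  have h01 := hp.adj 0 hp.one_le
  rw [hv0'] at h01
  have hv1 : v 1 = U ∨ v 1 = X := by
    rcases h01 with h | h
    · exact absurd h (no_edge_from_D _)
    · exact parents_D _ h
  have h1k : 1 < k := by
    rcases Nat.lt_or_ge 1 k with h | h
    · exact h
    · have hk1 : k = 1 := le_antisymm h hp.one_le
      rcases hv1 with h | h <;> rw [hk1, h] at hvk' <;> exact absurd hvk' (by decide)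
  rcases hv1 with hv1 | hv1
  · -- v 1 = U : continue to v 2
    have h12 := hp.adj 1 h1k
    rw [hv1] at h12
    have hv2 : v 2 = Y0 ∨ v 2 = Y1 ∨ v 2 = X := by
      rcases h12 with h | h
      · rcases children_U _ h with h | h | h | h
        · exact Or.inl h
        · exact Or.inr (Or.inl h)
        · exfalso
          have := hp.inj 2 (by omega) 0 (by omega) (by rw [h, hv0'])
          omega
        · exact Or.inr (Or.inr h)
      · exact absurd h (no_edge_to_U _)
    have h2k : 2 < k := by
      rcases Nat.lt_or_ge 2 k with h | h
      · exact h
      · have hk2 : k = 2 := le_antisymm h (by omega)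
        rcases hv2 with h | h | h <;> rw [hk2, h] at hvk' <;> exact absurd hvk' (by decide)
    rcases hv2 with hv2 | hv2 | hv2
    · -- v 2 = Y0 : collider with no descendants, Y0 ∉ {X, o}
      refine ⟨2, by omega, h2k, Or.inr ⟨⟨?_, ?_⟩, ?_, ?_⟩⟩
      · show E11 (v 1) (v 2); rw [hv1, hv2]; decide
      · have h23 := hp.adj 2 h2k
        rw [hv2] at h23
        rcases h23 with h | h
        · exact absurd h (no_edge_from_Y0 _)
        · rw [hv2]; exact h
      · rw [hv2]; rintro (h | h) <;> exact absurd h (by decide)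
      · rw [hv2]; exact fun w hw => absurd hw (no_desc_Y0 w)
    · -- v 2 = Y1 : collider with no descendants, Y1 ∉ {X, o}
      refine ⟨2, by omega, h2k, Or.inr ⟨⟨?_, ?_⟩, ?_, ?_⟩⟩
      · show E11 (v 1) (v 2); rw [hv1, hv2]; decide
      · have h23 := hp.adj 2 h2k
        rw [hv2] at h23
        rcases h23 with h | h
        · exact absurd h (no_edge_from_Y1 _)
        · rw [hv2]; exact h
      · rw [hv2]; rintro (h | h) <;> exact absurd h (by decide)
      · rw [hv2]; exact fun w hw => absurd hw (no_desc_Y1 w)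
    · -- v 2 = X : non-collider in Z
      refine ⟨2, by omega, h2k, Or.inl ⟨?_, ?_⟩⟩
      · rintro ⟨-, h3⟩
        rw [hv2] at h3
        have h3U : v 3 = U := parents_X _ h3
        have := hp.inj 3 (by omega) 1 (by omega) (by rw [h3U, hv1])
        omega
      · rw [hv2]; exact Or.inl rfl
  · -- v 1 = X : non-collider in Z
    refine ⟨1, by omega, h1k, Or.inl ⟨?_, ?_⟩⟩
    · rintro ⟨h0, -⟩
      rw [hv0', hv1] at h0
      exact absurd h0 (by decide)
    · rw [hv1]; exact Or.inl rfl

open V11 in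
/-- **2×2 Δ-SWIG with time-invariant covariates.** The graph is
a DAG; `{D}` and `{Δ}` are d-separated by `{X, o}`; but `{D}` and `{Δ}` are
not d-separated by `{X, Y₀, o}` (conditioning on the pre-treatment outcome
`Y₀` opens the path `D ← U → Y₀ ← E₀ → Δ`, i.e. M-bias). -/
theorem deltaSWIG_2x2 :
    IsDAG E11 ∧ DSep E11 {D} {Δ} {X, o} ∧ ¬ DSep E11 {D} {Δ} {X, Y0, o} := by
  refine ⟨E11_isDAG, dsep_XO, ?_⟩
  intro hsep
  -- the M-bias path D ← U → Y0 ← E0 → Δ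
  set p : ℕ → V11 := fun n =>
    match n with
    | 0 => D | 1 => U | 2 => Y0 | 3 => E0 | _ => Δ with hp
  have hpath : IsPath E11 4 p := by
    refine ⟨by omega, ?_, ?_⟩
    · intro i hi j hj hij
      interval_cases i <;> interval_cases j <;> simp_all [hp]
    · intro i hi
      interval_cases i <;> simp [hp] <;> decide
  have hblocked := hsep 4 p hpath (by simp [hp]) (by simp [hp])
  obtain ⟨j, hj0, hj4, hb⟩ := hblocked
  interval_cases j
  · -- j = 1 : U, not a collider, U ∉ Z
    rcases hb with ⟨-, hmem⟩ | ⟨⟨hc, -⟩, -⟩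
    · simp [hp] at hmem
    · exact absurd hc (by simp [hp]; decide)
  · -- j = 2 : Y0, a collider, Y0 ∈ Z
    rcases hb with ⟨hnc, -⟩ | ⟨-, hmem, -⟩
    · exact hnc ⟨by simp [hp]; decide, by simp [hp]; decide⟩
    · simp [hp] at hmem
  · -- j = 3 : E0, not a collider, E0 ∉ Z
    rcases hb with ⟨-, hmem⟩ | ⟨⟨-, hc⟩, -⟩
    · simp [hp] at hmem
    · exact absurd hc (by simp [hp]; decide)

end DeltaSwig
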